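/- arXiv:1607.07218 — 3 statements merged into one kernel-verified Lean document; each statement's English description precedes it below -/
import Mathlib

section
/- For x ∈ (0,1), the series f(x) = ∑_{k=1}^∞ (1/(2k-1)) * C(2k,k) * x^k * (1-x)^k satisfies f(x) ≤ 1, with equality if and only if x = 1/2. (Equivalently, f(x) = 1 - |1-2x| = 1 - √(1-4x(1-x)).) -/
open Finset Filter

private noncomputable def brsTerm (x : ℝ) (k : ℕ) : ℝ :=
  (1 / (2 * (k + 1 : ℝ) - 1)) * (Nat.choose (2 * (k + 1)) (k + 1)) *
    x ^ (k + 1) * (1 - x) ^ (k + 1)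

private lemma brs_denom (k : ℕ) : 2 * ((k:ℝ) + 1) - 1 = 2 * k + 1 := by ring

private lemma brsTerm_nonneg {x : ℝ} (hx : x ∈ Set.Ioo (0 : ℝ) 1) (k : ℕ) :
    0 ≤ brsTerm x k := by
  unfold brsTerm
  rw [brs_denom]
  have h1 : (0:ℝ) ≤ x := hx.1.le
  have h2 : (0:ℝ) ≤ 1 - x := by linarith [hx.2]
  positivity

private lemma brsTerm_half (k : ℕ) :
    brsTerm (1/2) k = (Nat.centralBinom (k+1) : ℝ) / ((2 * (k:ℝ) + 1) * 4 ^ (k+1)) := by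
  unfold brsTerm
  rw [brs_denom, show ((1:ℝ) - 1/2) = 1/2 by norm_num,
    show Nat.centralBinom (k+1) = (2*(k+1)).choose (k+1) from rfl]
  have h2n : (2*(k:ℝ)+1) ≠ 0 := by positivity
  have h4 : ((4:ℝ)^(k+1)) ≠ 0 := by positivity
  field_simp
  rw [show (4:ℝ)^(k+1) = 2^(k+1) * 2^(k+1) by rw [← mul_pow]; norm_num]
  ring_nf
  rw [mul_assoc, ← mul_pow]; norm_num

private lemma brsPartial (n : ℕ) :
    ∑ k ∈ range n, brsTerm (1/2) k = 1 - (Nat.centralBinom n : ℝ) / 4 ^ n := by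
  induction n with
  | zero => simp [Nat.centralBinom]
  | succ n ih =>
    rw [Finset.sum_range_succ, ih, brsTerm_half]
    have key : ((n:ℝ)+1) * (Nat.centralBinom (n+1) : ℝ)
        = 2 * (2 * n + 1) * (Nat.centralBinom n : ℝ) := by
      exact_mod_cast congrArg (Nat.cast : ℕ → ℝ) (Nat.succ_mul_centralBinom_succ n)
    have h4 : ((4:ℝ)^n) ≠ 0 := by positivity
    have h2n : (2*(n:ℝ)+1) ≠ 0 := by positivity
    field_simp
    linear_combination (2 * (4:ℝ)^n) * key

private lemma brs_cb_sq_le (n : ℕ) :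
    (Nat.centralBinom n : ℝ)^2 * (2 * n + 1) ≤ 16 ^ n := by
  induction n with
  | zero => simp [Nat.centralBinom]
  | succ n ih =>
    set a := (Nat.centralBinom n : ℝ) with ha
    set b := (Nat.centralBinom (n+1) : ℝ) with hb
    have key : ((n:ℝ)+1) * b = 2 * (2*n+1) * a := by
      rw [ha, hb]
      exact_mod_cast congrArg (Nat.cast : ℕ → ℝ) (Nat.succ_mul_centralBinom_succ n)
    have hn1 : (0:ℝ) < ((n:ℝ)+1)^2 := by positivity
    have hsq : ((n:ℝ)+1)^2 * (b^2 * (2*((n:ℝ)+1)+1)) = 4*(2*n+1)^2*(2*n+3) * a^2 := by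
      linear_combination ((2*(n:ℝ)+3) * (((n:ℝ)+1)*b + 2*(2*n+1)*a)) * key
    have hb2 : 4*(2*(n:ℝ)+1)^2*(2*n+3) * a^2 ≤ 16 * ((n:ℝ)+1)^2 * (a^2*(2*n+1)) := by
      nlinarith [sq_nonneg a, mul_nonneg (mul_nonneg (by positivity : (0:ℝ) ≤ 2*(n:ℝ)+1)
        (sq_nonneg a)) (by positivity : (0:ℝ) ≤ (n:ℝ))]
    have h3 : 16 * ((n:ℝ)+1)^2 * (a^2*(2*n+1)) ≤ 16 * ((n:ℝ)+1)^2 * 16^n :=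
      mul_le_mul_of_nonneg_left ih (by positivity)
    have hfin : ((n:ℝ)+1)^2 * (b^2 * (2*((n:ℝ)+1)+1)) ≤ ((n:ℝ)+1)^2 * 16^(n+1) := by
      rw [hsq]
      calc 4*(2*(n:ℝ)+1)^2*(2*n+3) * a^2 ≤ 16 * ((n:ℝ)+1)^2 * (a^2*(2*n+1)) := hb2
        _ ≤ 16 * ((n:ℝ)+1)^2 * 16^n := h3
        _ = ((n:ℝ)+1)^2 * 16^(n+1) := by ring
    have := le_of_mul_le_mul_left hfin hn1
    push_cast
    linarith [this]

private lemma brs_cb_tendsto :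
    Tendsto (fun n : ℕ => (Nat.centralBinom n : ℝ) / 4 ^ n) atTop (nhds 0) := by
  have hnn : ∀ n : ℕ, (0:ℝ) ≤ (Nat.centralBinom n : ℝ) / 4 ^ n := fun n => by positivity
  have hsqle : ∀ n : ℕ, ((Nat.centralBinom n : ℝ) / 4 ^ n)^2 ≤ 1 / ((n:ℝ) + 1) := by
    intro n
    have h4 : (0:ℝ) < (4:ℝ) ^ n := by positivity
    have h2n : (0:ℝ) < 2 * (n:ℝ) + 1 := by positivity
    have hn1 : (0:ℝ) < (n:ℝ) + 1 := by positivity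
    rw [div_pow, div_le_div_iff₀ (by positivity) hn1]
    have h16 : ((4:ℝ)^n)^2 = 16^n := by
      rw [← pow_mul, show (16:ℝ) = 4^2 by norm_num, ← pow_mul, mul_comm]
    have := brs_cb_sq_le n
    nlinarith [sq_nonneg ((Nat.centralBinom n : ℝ)), this]
  have hsq0 : Tendsto (fun n : ℕ => ((Nat.centralBinom n : ℝ) / 4 ^ n)^2) atTop (nhds 0) := by
    apply squeeze_zero (fun n => by positivity) hsqle
    exact tendsto_one_div_add_atTop_nhds_zero_nat
  have := (Real.continuous_sqrt.tendsto 0).comp hsq0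
  rw [Real.sqrt_zero] at this
  refine this.congr fun n => ?_
  simp only [Function.comp_apply]
  exact Real.sqrt_sq (hnn n)

theorem biased_return_series_le_one (x : ℝ) (hx : x ∈ Set.Ioo (0 : ℝ) 1) :
    (∑' k : ℕ, (1 / (2 * (k + 1 : ℝ) - 1)) * (Nat.choose (2 * (k + 1)) (k + 1)) *
        x ^ (k + 1) * (1 - x) ^ (k + 1)) ≤ 1 ∧
    ((∑' k : ℕ, (1 / (2 * (k + 1 : ℝ) - 1)) * (Nat.choose (2 * (k + 1)) (k + 1)) *
        x ^ (k + 1) * (1 - x) ^ (k + 1)) = 1 ↔ x = 1 / 2) := by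
  have hhalf : (1:ℝ)/2 ∈ Set.Ioo (0:ℝ) 1 := by norm_num
  have hps : ∀ n, ∑ k ∈ range n, brsTerm (1/2) k ≤ 1 := by
    intro n
    rw [brsPartial]
    have : (0:ℝ) ≤ (Nat.centralBinom n : ℝ) / 4 ^ n := by positivity
    linarith
  have hsum_half : Summable (brsTerm (1/2)) :=
    summable_of_sum_range_le (brsTerm_nonneg hhalf) hps
  have htsum_half : (∑' k, brsTerm (1/2) k) = 1 := by
    have h1 : Tendsto (fun n => ∑ k ∈ range n, brsTerm (1/2) k) atTop
        (nhds (∑' k, brsTerm (1/2) k)) := hsum_half.hasSum.tendsto_sum_nat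
    have h2 : Tendsto (fun n => ∑ k ∈ range n, brsTerm (1/2) k) atTop (nhds 1) := by
      have := (tendsto_const_nhds (x := (1:ℝ)) (f := atTop)).sub brs_cb_tendsto
      rw [sub_zero] at this
      exact this.congr fun n => (brsPartial n).symm
    exact tendsto_nhds_unique h1 h2
  have hxle : ∀ k, brsTerm x k ≤ brsTerm (1/2) k := by
    intro k
    unfold brsTerm
    rw [brs_denom]
    have hc : (0:ℝ) ≤ (1 / (2 * (k:ℝ) + 1)) * (Nat.choose (2 * (k + 1)) (k + 1)) := by
      positivity
    have hxx : x * (1 - x) ≤ (1/2 : ℝ) * (1 - 1/2) := by nlinarith [sq_nonneg (1 - 2*x)]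
    have hx0 : (0:ℝ) ≤ x * (1-x) := by nlinarith [hx.1, hx.2]
    have hpow : (x * (1-x))^(k+1) ≤ ((1/2:ℝ) * (1 - 1/2))^(k+1) :=
      pow_le_pow_left₀ hx0 hxx _
    calc (1 / (2 * (k:ℝ) + 1)) * (Nat.choose (2 * (k + 1)) (k + 1)) * x ^ (k+1) * (1-x)^(k+1)
        = (1 / (2 * (k:ℝ) + 1)) * (Nat.choose (2 * (k + 1)) (k + 1)) * (x * (1-x))^(k+1) := by
          rw [mul_pow]; ring
      _ ≤ (1 / (2 * (k:ℝ) + 1)) * (Nat.choose (2 * (k + 1)) (k + 1)) * ((1/2:ℝ) * (1-1/2))^(k+1) :=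
          mul_le_mul_of_nonneg_left hpow hc
      _ = (1 / (2 * (k:ℝ) + 1)) * (Nat.choose (2 * (k + 1)) (k + 1)) * (1/2:ℝ)^(k+1) * (1-1/2:ℝ)^(k+1) := by
          rw [mul_pow]; ring
  have hsum_x : Summable (brsTerm x) := by
    apply summable_of_sum_range_le (brsTerm_nonneg hx)
    intro n
    calc ∑ k ∈ range n, brsTerm x k ≤ ∑ k ∈ range n, brsTerm (1/2) k :=
        Finset.sum_le_sum fun k _ => hxle k
      _ ≤ 1 := hps n
  have hxle_tsum : (∑' k, brsTerm x k) ≤ 1 := by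
    rw [← htsum_half]
    exact Summable.tsum_le_tsum hxle hsum_x hsum_half
  refine ⟨hxle_tsum, ?_, ?_⟩
  · intro heq
    by_contra hne
    have h0 : (1 - 2*x) ≠ 0 := by
      intro h; apply hne; linarith
    have hpos : (0:ℝ) < (1 - 2*x)^2 := by positivity
    have hstrict : brsTerm x 0 < brsTerm (1/2) 0 := by
      unfold brsTerm
      norm_num
      nlinarith [hpos]
    have hlt := Summable.tsum_lt_tsum hxle hstrict hsum_x hsum_half
    rw [htsum_half] at hlt
    exact absurd heq (ne_of_lt hlt)
  · intro h
    subst h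
    exact htsum_half
end

section
/- Let L, R be n×n complex normal matrices with L*L + R*R = I. Then for every n×n matrix X, Tr(L R X R* L*) = Tr(R L X L* R*). -/
open Matrix

theorem trace_LRXRL_eq_trace_RLXLR (n : ℕ) (L R X : Matrix (Fin n) (Fin n) ℂ)
    (h : Lᴴ * L + Rᴴ * R = 1) (hL : L * Lᴴ = Lᴴ * L) (hR : R * Rᴴ = Rᴴ * R) :
    (L * R * X * Rᴴ * Lᴴ).trace = (R * L * X * Lᴴ * Rᴴ).trace := by
  have e1 : Lᴴ * L = 1 - Rᴴ * R := eq_sub_of_add_eq h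
  have e2 : Rᴴ * R = 1 - Lᴴ * L := eq_sub_of_add_eq (by rw [add_comm]; exact h)
  have key : Rᴴ * (Lᴴ * L) * R = Lᴴ * (Rᴴ * R) * L := by
    have h1 : Rᴴ * (Lᴴ * L) * R = Rᴴ * R - (Rᴴ * R) * (Rᴴ * R) := by
      rw [e1, mul_sub, mul_one, sub_mul]
      congr 1
      conv_rhs => rw [mul_assoc, ← mul_assoc R, hR]
      rw [mul_assoc]
    have h2 : Lᴴ * (Rᴴ * R) * L = Lᴴ * L - (Lᴴ * L) * (Lᴴ * L) := by
      rw [e2, mul_sub, mul_one, sub_mul]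
      congr 1
      conv_rhs => rw [mul_assoc, ← mul_assoc L, hL]
      rw [mul_assoc]
    rw [h1, h2, e1]
    noncomm_ring
  have t1 : (L * R * X * Rᴴ * Lᴴ).trace = ((Rᴴ * (Lᴴ * L) * R) * X).trace := by
    rw [mul_assoc (L * R * X), trace_mul_comm]
    congr 1
    simp only [mul_assoc]
  have t2 : (R * L * X * Lᴴ * Rᴴ).trace = ((Lᴴ * (Rᴴ * R) * L) * X).trace := by
    rw [mul_assoc (R * L * X), trace_mul_comm]
    congr 1
    simp only [mul_assoc]
  rw [t1, t2, key]
end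

section
/- Let L, R be 2×2 complex normal matrices with L*L + R*R = I, diagonalized simultaneously as L*L = U diag(λ, μ) U* and R*R = U diag(1-λ, 1-μ) U* for a unitary U and 0 ≤ λ, μ ≤ 1. Then for any sequence of nonnegative integers l_1, r_1, ..., l_m, r_m with ∑ l_i = ∑ r_i = r and any 2×2 matrix X with (U* X U)_{11} = x_{11} and Tr(X)=1, Tr(L^{l_1} R^{r_1} ⋯ L^{l_m} R^{r_m} X (L^{l_1} R^{r_1} ⋯ L^{l_m} R^{r_m})*) = λ^r (1-λ)^r x_{11} + μ^r (1-μ)^r (1 - x_{11}). -/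
open Matrix

private lemma tpn_diag2_one : Matrix.diagonal ![(1:ℂ), 1] = 1 := by
  ext i j; fin_cases i <;> fin_cases j <;> simp [Matrix.diagonal_apply, Matrix.one_apply]

private lemma tpn_diag2_smul (x : ℂ) :
    Matrix.diagonal ![x, x] = x • (1 : Matrix (Fin 2) (Fin 2) ℂ) := by
  ext i j
  fin_cases i <;> fin_cases j <;> simp [Matrix.diagonal_apply, Matrix.one_apply]

private lemma tpn_conj_mul_conj (U M N : Matrix (Fin 2) (Fin 2) ℂ) (hU' : Uᴴ * U = 1) :
    (U * M * Uᴴ) * (U * N * Uᴴ) = U * (M * N) * Uᴴ := by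
  simp only [mul_assoc]
  rw [← mul_assoc Uᴴ U, hU', one_mul]

private lemma tpn_conj_pow (U M : Matrix (Fin 2) (Fin 2) ℂ) (hU : U * Uᴴ = 1)
    (hU' : Uᴴ * U = 1) (n : ℕ) : (U * M * Uᴴ) ^ n = U * M ^ n * Uᴴ := by
  induction n with
  | zero => simp only [pow_zero, mul_one]; rw [hU]
  | succ k ih => rw [pow_succ, pow_succ, ih, tpn_conj_mul_conj U _ _ hU']

private lemma tpn_diag2_pow (a b : ℂ) (n : ℕ) :
    Matrix.diagonal ![a, b] ^ n = Matrix.diagonal ![a ^ n, b ^ n] := by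
  induction n with
  | zero =>
    ext i j
    fin_cases i <;> fin_cases j <;> simp [Matrix.diagonal_apply, Matrix.one_apply]
  | succ k ih =>
    rw [pow_succ, ih, Matrix.diagonal_mul_diagonal]
    ext i j; fin_cases i <;> fin_cases j <;> simp [Matrix.diagonal_apply, pow_succ]

private lemma tpn_prod_conj (U : Matrix (Fin 2) (Fin 2) ℂ) (hU : U * Uᴴ = 1) (hU' : Uᴴ * U = 1)
    (a b c d : ℂ) (ps : List (ℕ × ℕ)) :
    (ps.map (fun p => (U * Matrix.diagonal ![a, b] * Uᴴ) ^ p.1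
        * (U * Matrix.diagonal ![c, d] * Uᴴ) ^ p.2)).prod
    = U * Matrix.diagonal ![(ps.map (fun p => a ^ p.1 * c ^ p.2)).prod,
        (ps.map (fun p => b ^ p.1 * d ^ p.2)).prod] * Uᴴ := by
  induction ps with
  | nil => simp only [List.map_nil, List.prod_nil, tpn_diag2_one, mul_one]; rw [hU]
  | cons p t ih =>
    rw [List.map_cons, List.prod_cons, ih, tpn_conj_pow U _ hU hU', tpn_conj_pow U _ hU hU',
      tpn_diag2_pow, tpn_diag2_pow, tpn_conj_mul_conj U _ _ hU', Matrix.diagonal_mul_diagonal,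
      tpn_conj_mul_conj U _ _ hU', Matrix.diagonal_mul_diagonal, List.map_cons, List.map_cons,
      List.prod_cons, List.prod_cons]
    refine congrArg (· * Uᴴ) (congrArg (U * ·) (congrArg Matrix.diagonal ?_))
    funext i
    fin_cases i <;> simp

private lemma tpn_pow_ct_mul_pow (L : Matrix (Fin 2) (Fin 2) ℂ) (c : ℂ)
    (h : Lᴴ * L = c • 1) (l : ℕ) : Lᴴ ^ l * L ^ l = c ^ l • 1 := by
  induction l with
  | zero => simp
  | succ k ih =>
    rw [pow_succ Lᴴ, pow_succ' L]
    calc Lᴴ ^ k * Lᴴ * (L * L ^ k) = Lᴴ ^ k * (Lᴴ * L) * L ^ k := by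
          simp only [mul_assoc]
      _ = Lᴴ ^ k * (c • (1 : Matrix (Fin 2) (Fin 2) ℂ)) * L ^ k := by rw [h]
      _ = c • (Lᴴ ^ k * L ^ k) := by
          rw [mul_smul_comm, smul_mul_assoc, mul_one]
      _ = c ^ (k + 1) • 1 := by rw [ih, smul_smul, ← pow_succ']

private lemma tpn_prod_ct_mul_prod (L R : Matrix (Fin 2) (Fin 2) ℂ) (cl cr : ℂ)
    (hLc : Lᴴ * L = cl • 1) (hRc : Rᴴ * R = cr • 1) (ps : List (ℕ × ℕ)) :
    ((ps.map (fun p => L ^ p.1 * R ^ p.2)).prod)ᴴ * (ps.map (fun p => L ^ p.1 * R ^ p.2)).prod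
    = (cl ^ (ps.map Prod.fst).sum * cr ^ (ps.map Prod.snd).sum) • 1 := by
  induction ps with
  | nil => simp
  | cons p t ih =>
    simp only [List.map_cons, List.prod_cons, List.sum_cons]
    have hF : (L ^ p.1 * R ^ p.2)ᴴ * (L ^ p.1 * R ^ p.2) = (cl ^ p.1 * cr ^ p.2) • 1 := by
      rw [conjTranspose_mul, conjTranspose_pow, conjTranspose_pow]
      calc Rᴴ ^ p.2 * Lᴴ ^ p.1 * (L ^ p.1 * R ^ p.2)
          = Rᴴ ^ p.2 * (Lᴴ ^ p.1 * L ^ p.1) * R ^ p.2 := by simp only [mul_assoc]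
        _ = Rᴴ ^ p.2 * (cl ^ p.1 • (1 : Matrix (Fin 2) (Fin 2) ℂ)) * R ^ p.2 := by
            rw [tpn_pow_ct_mul_pow L cl hLc]
        _ = cl ^ p.1 • (Rᴴ ^ p.2 * R ^ p.2) := by
            rw [mul_smul_comm, smul_mul_assoc, mul_one]
        _ = (cl ^ p.1 * cr ^ p.2) • 1 := by rw [tpn_pow_ct_mul_pow R cr hRc, smul_smul]
    set T := (t.map (fun p => L ^ p.1 * R ^ p.2)).prod with hT
    calc (L ^ p.1 * R ^ p.2 * T)ᴴ * (L ^ p.1 * R ^ p.2 * T)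
        = Tᴴ * ((L ^ p.1 * R ^ p.2)ᴴ * (L ^ p.1 * R ^ p.2)) * T := by
          rw [conjTranspose_mul]; simp only [mul_assoc]
      _ = Tᴴ * ((cl ^ p.1 * cr ^ p.2) • (1 : Matrix (Fin 2) (Fin 2) ℂ)) * T := by rw [hF]
      _ = (cl ^ p.1 * cr ^ p.2) • (Tᴴ * T) := by
          rw [mul_smul_comm, smul_mul_assoc, mul_one]
      _ = (cl ^ p.1 * cr ^ p.2) • ((cl ^ (t.map Prod.fst).sum * cr ^ (t.map Prod.snd).sum)
            • (1 : Matrix (Fin 2) (Fin 2) ℂ)) := by rw [ih]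
      _ = (cl ^ (p.1 + (t.map Prod.fst).sum) * cr ^ (p.2 + (t.map Prod.snd).sum)) • 1 := by
          rw [smul_smul]; congr 1; ring

private lemma tpn_prod_mul_star (a c la lc : ℂ) (ha : star a * a = la) (hc : star c * c = lc)
    (ps : List (ℕ × ℕ)) :
    (ps.map (fun k => a ^ k.1 * c ^ k.2)).prod * star ((ps.map (fun k => a ^ k.1 * c ^ k.2)).prod)
    = la ^ (ps.map Prod.fst).sum * lc ^ (ps.map Prod.snd).sum := by
  induction ps with
  | nil => simp
  | cons k t ih =>
    simp only [List.map_cons, List.prod_cons, List.sum_cons, star_mul', star_pow]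
    set P := (t.map (fun k => a ^ k.1 * c ^ k.2)).prod with hP
    calc a ^ k.1 * c ^ k.2 * P * (star a ^ k.1 * star c ^ k.2 * star P)
        = (star a * a) ^ k.1 * (star c * c) ^ k.2 * (P * star P) := by ring
      _ = la ^ k.1 * lc ^ k.2 * (la ^ (t.map Prod.fst).sum * lc ^ (t.map Prod.snd).sum) := by
          rw [ha, hc, ih]
      _ = la ^ (k.1 + (t.map Prod.fst).sum) * lc ^ (k.2 + (t.map Prod.snd).sum) := by ring

theorem trace_path_product_normal
    (L R X U : Matrix (Fin 2) (Fin 2) ℂ) (lam mu : ℝ)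
    (hL : L * Lᴴ = Lᴴ * L) (hR : R * Rᴴ = Rᴴ * R)
    (hsum : Lᴴ * L + Rᴴ * R = 1)
    (hU : U * Uᴴ = 1) (hU' : Uᴴ * U = 1)
    (hlam : 0 ≤ lam ∧ lam ≤ 1) (hmu : 0 ≤ mu ∧ mu ≤ 1)
    (hdiagL : Lᴴ * L = U * Matrix.diagonal ![(lam : ℂ), (mu : ℂ)] * Uᴴ)
    (hdiagR : Rᴴ * R = U * Matrix.diagonal ![(1 - lam : ℂ), (1 - mu : ℂ)] * Uᴴ)
    (hX : X.trace = 1)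
    (ps : List (ℕ × ℕ)) (r : ℕ)
    (hl : (ps.map Prod.fst).sum = r) (hr : (ps.map Prod.snd).sum = r) :
    let A := (ps.map (fun p => L ^ p.1 * R ^ p.2)).prod
    let x11 := (Uᴴ * X * U) 0 0
    (A * X * Aᴴ).trace
      = (lam : ℂ) ^ r * (1 - lam) ^ r * x11 + (mu : ℂ) ^ r * (1 - mu) ^ r * (1 - x11) := by
  intro A x11
  have hA : A = (ps.map (fun p => L ^ p.1 * R ^ p.2)).prod := rfl
  have hx : x11 = (Uᴴ * X * U) 0 0 := rfl
  have hUU : ∀ M : Matrix (Fin 2) (Fin 2) ℂ, Uᴴ * (U * M) = M := fun M => by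
    rw [← mul_assoc, hU', one_mul]
  have hUU' : ∀ M : Matrix (Fin 2) (Fin 2) ℂ, U * (Uᴴ * M) = M := fun M => by
    rw [← mul_assoc, hU, one_mul]
  by_cases hlm : (lam : ℂ) = (mu : ℂ)
  · -- scalar case
    have hLc : Lᴴ * L = (lam : ℂ) • 1 := by
      rw [hdiagL, ← hlm, tpn_diag2_smul, mul_smul_comm, smul_mul_assoc, mul_one, hU]
    have hRc : Rᴴ * R = ((1 : ℂ) - lam) • 1 := by
      rw [hdiagR, ← hlm, tpn_diag2_smul, mul_smul_comm, smul_mul_assoc, mul_one, hU]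
    have key := tpn_prod_ct_mul_prod L R _ _ hLc hRc ps
    rw [hl, hr] at key
    rw [hA, Matrix.trace_mul_cycle, key, smul_mul_assoc, one_mul, Matrix.trace_smul, hX, ← hlm,
      smul_eq_mul, mul_one]
    ring
  · -- distinct eigenvalue case
    have hcomL : L * (Lᴴ * L) = (Lᴴ * L) * L := by rw [← mul_assoc, hL]
    have hcomR : R * (Lᴴ * L) = (Lᴴ * L) * R := by
      have h1 : Lᴴ * L = 1 - Rᴴ * R := eq_sub_of_add_eq hsum
      have h2 : R * (Rᴴ * R) = (Rᴴ * R) * R := by rw [← mul_assoc, hR]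
      rw [h1, mul_sub, sub_mul, mul_one, one_mul, h2]
    -- matrices commuting with diag(lam, mu) are diagonal
    have diag_of_comm : ∀ M : Matrix (Fin 2) (Fin 2) ℂ,
        M * (Lᴴ * L) = (Lᴴ * L) * M →
        Uᴴ * M * U = Matrix.diagonal ![(Uᴴ * M * U) 0 0, (Uᴴ * M * U) 1 1] := by
      intro M hM
      rw [hdiagL] at hM
      have hM' : (Uᴴ * M * U) * Matrix.diagonal ![(lam : ℂ), (mu : ℂ)]
          = Matrix.diagonal ![(lam : ℂ), (mu : ℂ)] * (Uᴴ * M * U) := by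
        have := congrArg (fun N => Uᴴ * N * U) hM
        simpa only [mul_assoc, hUU, hUU', hU, hU', mul_one] using this
      have h01 : (Uᴴ * M * U) 0 1 = 0 := by
        have e := congrArg (fun N => N 0 1) hM'
        simp only [Matrix.mul_diagonal, Matrix.diagonal_mul, Matrix.cons_val_zero,
          Matrix.cons_val_one, Matrix.head_cons] at e
        have e2 : (Uᴴ * M * U) 0 1 * ((mu : ℂ) - lam) = 0 := by linear_combination e
        rcases mul_eq_zero.mp e2 with h | h
        · exact h
        · exact absurd (sub_eq_zero.mp h).symm hlm
      have h10 : (Uᴴ * M * U) 1 0 = 0 := by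
        have e := congrArg (fun N => N 1 0) hM'
        simp only [Matrix.mul_diagonal, Matrix.diagonal_mul, Matrix.cons_val_zero,
          Matrix.cons_val_one, Matrix.head_cons] at e
        have e2 : (Uᴴ * M * U) 1 0 * ((lam : ℂ) - mu) = 0 := by linear_combination e
        rcases mul_eq_zero.mp e2 with h | h
        · exact h
        · exact absurd (sub_eq_zero.mp h) hlm
      ext i j
      fin_cases i <;> fin_cases j <;>
        simp [Matrix.diagonal_apply, h01, h10]
    set a := (Uᴴ * L * U) 0 0 with ha
    set b := (Uᴴ * L * U) 1 1 with hb
    set c := (Uᴴ * R * U) 0 0 with hc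
    set d := (Uᴴ * R * U) 1 1 with hd
    have hLdiag : Uᴴ * L * U = Matrix.diagonal ![a, b] := diag_of_comm L hcomL
    have hRdiag : Uᴴ * R * U = Matrix.diagonal ![c, d] := diag_of_comm R hcomR
    have hL2 : L = U * Matrix.diagonal ![a, b] * Uᴴ := by
      rw [← hLdiag]
      simp only [mul_assoc, hUU, hUU', hU, hU', mul_one]
    have hR2 : R = U * Matrix.diagonal ![c, d] * Uᴴ := by
      rw [← hRdiag]
      simp only [mul_assoc, hUU, hUU', hU, hU', mul_one]
    -- entry norms
    have hDL : (Matrix.diagonal ![a, b])ᴴ * Matrix.diagonal ![a, b]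
        = Matrix.diagonal ![(lam : ℂ), (mu : ℂ)] := by
      have h3 : Uᴴ * (Lᴴ * L) * U = Matrix.diagonal ![(lam : ℂ), (mu : ℂ)] := by
        rw [hdiagL]
        simp only [mul_assoc, hUU, hUU', hU, hU', mul_one]
      calc (Matrix.diagonal ![a, b])ᴴ * Matrix.diagonal ![a, b]
          = (Uᴴ * L * U)ᴴ * (Uᴴ * L * U) := by rw [hLdiag]
        _ = Uᴴ * (Lᴴ * L) * U := by
            simp only [Matrix.conjTranspose_mul, Matrix.conjTranspose_conjTranspose,
              mul_assoc, hUU, hUU', hU, hU', mul_one]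
        _ = Matrix.diagonal ![(lam : ℂ), (mu : ℂ)] := h3
    have hDR : (Matrix.diagonal ![c, d])ᴴ * Matrix.diagonal ![c, d]
        = Matrix.diagonal ![(1 - lam : ℂ), (1 - mu : ℂ)] := by
      have h3 : Uᴴ * (Rᴴ * R) * U = Matrix.diagonal ![(1 - lam : ℂ), (1 - mu : ℂ)] := by
        rw [hdiagR]
        simp only [mul_assoc, hUU, hUU', hU, hU', mul_one]
      calc (Matrix.diagonal ![c, d])ᴴ * Matrix.diagonal ![c, d]
          = (Uᴴ * R * U)ᴴ * (Uᴴ * R * U) := by rw [hRdiag]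
        _ = Uᴴ * (Rᴴ * R) * U := by
            simp only [Matrix.conjTranspose_mul, Matrix.conjTranspose_conjTranspose,
              mul_assoc, hUU, hUU', hU, hU', mul_one]
        _ = Matrix.diagonal ![(1 - lam : ℂ), (1 - mu : ℂ)] := h3
    have hsa : star a * a = (lam : ℂ) := by
      have := congrArg (fun N => N 0 0) hDL
      simpa [Matrix.mul_apply, Fin.sum_univ_two, Matrix.diagonal_apply,
        Matrix.conjTranspose_apply] using this
    have hsb : star b * b = (mu : ℂ) := by
      have := congrArg (fun N => N 1 1) hDL
      simpa [Matrix.mul_apply, Fin.sum_univ_two, Matrix.diagonal_apply,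
        Matrix.conjTranspose_apply] using this
    have hsc : star c * c = (1 - lam : ℂ) := by
      have := congrArg (fun N => N 0 0) hDR
      simpa [Matrix.mul_apply, Fin.sum_univ_two, Matrix.diagonal_apply,
        Matrix.conjTranspose_apply] using this
    have hsd : star d * d = (1 - mu : ℂ) := by
      have := congrArg (fun N => N 1 1) hDR
      simpa [Matrix.mul_apply, Fin.sum_univ_two, Matrix.diagonal_apply,
        Matrix.conjTranspose_apply] using this
    -- A as conjugated diagonal
    set p := (ps.map (fun k => a ^ k.1 * c ^ k.2)).prod with hp
    set q := (ps.map (fun k => b ^ k.1 * d ^ k.2)).prod with hq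
    have hAform : A = U * Matrix.diagonal ![p, q] * Uᴴ := by
      rw [hA, hL2, hR2]
      exact tpn_prod_conj U hU hU' a b c d ps
    -- conjugate transpose of A
    have hAH : Aᴴ = U * Matrix.diagonal ![star p, star q] * Uᴴ := by
      rw [hAform]
      have hst : star ![p, q] = ![star p, star q] := by
        funext i; fin_cases i <;> simp
      simp only [Matrix.conjTranspose_mul, Matrix.conjTranspose_conjTranspose,
        Matrix.diagonal_conjTranspose, hst, mul_assoc]
    -- trace computation
    have htr : (A * X * Aᴴ).trace
        = p * star p * ((Uᴴ * X * U) 0 0) + q * star q * ((Uᴴ * X * U) 1 1) := by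
      have e : A * X * Aᴴ
          = U * (Matrix.diagonal ![p, q] * (Uᴴ * X * U) * Matrix.diagonal ![star p, star q]) * Uᴴ := by
        rw [hAH, hAform]
        simp only [mul_assoc]
      rw [e, Matrix.trace_mul_cycle, ← mul_assoc, hU', one_mul, Matrix.trace_fin_two]
      simp only [Matrix.mul_diagonal, Matrix.diagonal_mul, Matrix.cons_val_zero,
        Matrix.cons_val_one, Matrix.head_cons]
      ring
    have htrX : (Uᴴ * X * U) 1 1 = 1 - x11 := by
      have h5 : (Uᴴ * X * U).trace = 1 := by
        rw [Matrix.trace_mul_cycle, hU, one_mul, hX]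
      rw [Matrix.trace_fin_two, ← hx] at h5
      linear_combination h5
    have hps := tpn_prod_mul_star a c _ _ hsa hsc ps
    have hqs := tpn_prod_mul_star b d _ _ hsb hsd ps
    rw [hl, hr] at hps hqs
    rw [htr, htrX, ← hx, hps, hqs]
end
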